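/- Let G be a graph and v a vertex of G. Let G⁻ be obtained from the disjoint union of G and a path w–u–t on 3 vertices by adding an edge joining v to the endpoint w. Then f(G⁻) = -f(G). -/

import Mathlib

open Finset

/- `f(G) = Σ_C (-1)^{|C|}` over all independent vertex sets `C` of `G`. -/
open Classical in
noncomputable def fgraph {V : Type*} [Fintype V] (G : SimpleGraph V) : ℤ :=
  ∑ s ∈ Finset.univ.filter (fun s : Finset V => ∀ u ∈ s, ∀ v ∈ s, ¬ G.Adj u v),
    (-1 : ℤ) ^ s.card

/- `f` of the induced subgraph of `G` on the vertex set `A`. -/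
open Classical in
noncomputable def fdel {V : Type*} [Fintype V] (G : SimpleGraph V) (A : Set V) : ℤ :=
  fgraph (G.induce A)

/-- The graph obtained from the disjoint union of `G` and `H` by adding an
extra edge joining `v ∈ G` and `w ∈ H`. -/
def glue {V W : Type*} (G : SimpleGraph V) (H : SimpleGraph W) (v : V) (w : W) :
    SimpleGraph (V ⊕ W) :=
  (G ⊕g H) ⊔ SimpleGraph.fromEdgeSet ({s(Sum.inl v, Sum.inr w)} : Set (Sym2 (V ⊕ W)))

open Classical in
lemma glue_adj {V W : Type*} (G : SimpleGraph V) (H : SimpleGraph W) (v : V) (w : W)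
    (x y : V ⊕ W) :
    (glue G H v w).Adj x y ↔ (G ⊕g H).Adj x y ∨ (x = Sum.inl v ∧ y = Sum.inr w) ∨
      (x = Sum.inr w ∧ y = Sum.inl v) := by
  simp only [glue, SimpleGraph.sup_adj, SimpleGraph.fromEdgeSet_adj, Set.mem_singleton_iff,
    Sym2.eq_iff]
  constructor
  · rintro (h | ⟨(⟨rfl, rfl⟩ | ⟨rfl, rfl⟩), hne⟩)
    · exact Or.inl h
    · exact Or.inr (Or.inl ⟨rfl, rfl⟩)
    · exact Or.inr (Or.inr ⟨rfl, rfl⟩)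
  · rintro (h | ⟨rfl, rfl⟩ | ⟨rfl, rfl⟩)
    · exact Or.inl h
    · exact Or.inr ⟨Or.inl ⟨rfl, rfl⟩, by simp⟩
    · exact Or.inr ⟨Or.inr ⟨rfl, rfl⟩, by simp⟩

lemma indep_disjSum {V W : Type*} (G : SimpleGraph V) (H : SimpleGraph W)
    (v : V) (w : W) (A : Finset V) (B : Finset W) :
    (∀ a ∈ A.disjSum B, ∀ b ∈ A.disjSum B, ¬ (glue G H v w).Adj a b) ↔
      ((∀ a ∈ A, ∀ b ∈ A, ¬ G.Adj a b) ∧ (∀ a ∈ B, ∀ b ∈ B, ¬ H.Adj a b) ∧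
        ¬ (v ∈ A ∧ w ∈ B)) := by
  constructor
  · intro h
    refine ⟨fun a ha b hb hab => ?_, fun a ha b hb hab => ?_, fun ⟨hv, hw⟩ => ?_⟩
    · exact h (Sum.inl a) (by simp [ha]) (Sum.inl b) (by simp [hb])
        ((glue_adj ..).2 (Or.inl (by simpa)))
    · exact h (Sum.inr a) (by simp [ha]) (Sum.inr b) (by simp [hb])
        ((glue_adj ..).2 (Or.inl (by simpa)))
    · exact h (Sum.inl v) (by simp [hv]) (Sum.inr w) (by simp [hw])
        ((glue_adj ..).2 (Or.inr (Or.inl ⟨rfl, rfl⟩)))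
  · rintro ⟨hG, hH, hvw⟩ x hx y hy hadj
    rcases (glue_adj ..).1 hadj with h | ⟨rfl, rfl⟩ | ⟨rfl, rfl⟩
    · rcases x with x | x <;> rcases y with y | y <;> simp only [SimpleGraph.sum_adj] at h
      · exact hG x (by simpa using hx) y (by simpa using hy) h
      · exact hH x (by simpa using hx) y (by simpa using hy) h
    · exact hvw ⟨by simpa using hx, by simpa using hy⟩
    · exact hvw ⟨by simpa using hy, by simpa using hx⟩

open Classical in
lemma glue_fgraph {V W : Type*} [Fintype V] [Fintype W] (G : SimpleGraph V)
    (H : SimpleGraph W) (v : V) (w : W) :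
    fgraph (glue G H v w) =
      ∑ A ∈ Finset.univ.filter (fun A : Finset V => ∀ a ∈ A, ∀ b ∈ A, ¬ G.Adj a b),
        (-1 : ℤ) ^ A.card *
          (if v ∈ A then
            ∑ B ∈ Finset.univ.filter
              (fun B : Finset W => (∀ a ∈ B, ∀ b ∈ B, ¬ H.Adj a b) ∧ w ∉ B),
              (-1 : ℤ) ^ B.card
          else
            ∑ B ∈ Finset.univ.filter
              (fun B : Finset W => ∀ a ∈ B, ∀ b ∈ B, ¬ H.Adj a b),
              (-1 : ℤ) ^ B.card) := by
  rw [fgraph]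
  rw [Finset.sum_filter]
  have hbij : Function.Bijective (fun p : Finset V × Finset W => p.1.disjSum p.2) := by
    constructor
    · rintro ⟨A₁, B₁⟩ ⟨A₂, B₂⟩ h
      simpa [Prod.ext_iff] using Finset.disjSum_inj.1 h
    · intro s
      exact ⟨(s.toLeft, s.toRight), s.toLeft_disjSum_toRight⟩
  rw [← Fintype.sum_bijective _ hbij _ _ (fun p => rfl), Fintype.sum_prod_type]
  simp only [indep_disjSum, Finset.card_disjSum, Finset.sum_filter, mul_ite, mul_zero,
    Finset.mul_sum]
  refine Finset.sum_congr rfl fun A _ => ?_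
  by_cases hA : ∀ a ∈ A, ∀ b ∈ A, ¬ G.Adj a b
  · rw [if_pos hA]
    by_cases hv : v ∈ A
    · rw [if_pos hv]
      refine Finset.sum_congr rfl fun B _ => ?_
      by_cases hB : (∀ a ∈ B, ∀ b ∈ B, ¬ H.Adj a b) ∧ w ∉ B
      · rw [if_pos ⟨hA, hB.1, fun hc => hB.2 hc.2⟩, if_pos hB, pow_add]
      · rw [if_neg (by tauto), if_neg hB]
    · rw [if_neg hv]
      refine Finset.sum_congr rfl fun B _ => ?_
      by_cases hB : ∀ a ∈ B, ∀ b ∈ B, ¬ H.Adj a b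
      · rw [if_pos ⟨hA, hB, fun hc => hv hc.1⟩, if_pos hB, pow_add]
      · rw [if_neg (by tauto), if_neg hB]
  · rw [if_neg hA]
    exact Finset.sum_eq_zero fun B _ => if_neg (by tauto)

lemma path3_sum0
    (inst : DecidablePred fun B : Finset (Fin 3) =>
      ∀ a ∈ B, ∀ b ∈ B, ¬ (SimpleGraph.pathGraph 3).Adj a b) :
    (∑ B ∈ @Finset.filter _ _ inst Finset.univ, (-1:ℤ)^B.card) = -1 := by
  rw [Finset.filter_congr (fun B _ => by simp only [SimpleGraph.pathGraph_adj] :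
    ∀ B ∈ (univ : Finset (Finset (Fin 3))),
      (∀ a ∈ B, ∀ b ∈ B, ¬ (SimpleGraph.pathGraph 3).Adj a b) ↔
      (∀ a ∈ B, ∀ b ∈ B, ¬((a:ℕ)+1=(b:ℕ) ∨ (b:ℕ)+1=(a:ℕ))))]
  decide
lemma path3_sum1
    (inst : DecidablePred fun B : Finset (Fin 3) =>
      (∀ a ∈ B, ∀ b ∈ B, ¬ (SimpleGraph.pathGraph 3).Adj a b) ∧ (0 : Fin 3) ∉ B) :
    (∑ B ∈ @Finset.filter _ _ inst Finset.univ, (-1:ℤ)^B.card) = -1 := by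
  rw [Finset.filter_congr (fun B _ => by simp only [SimpleGraph.pathGraph_adj] :
    ∀ B ∈ (univ : Finset (Finset (Fin 3))),
      ((∀ a ∈ B, ∀ b ∈ B, ¬ (SimpleGraph.pathGraph 3).Adj a b) ∧ (0 : Fin 3) ∉ B) ↔
      ((∀ a ∈ B, ∀ b ∈ B, ¬((a:ℕ)+1=(b:ℕ) ∨ (b:ℕ)+1=(a:ℕ))) ∧ (0 : Fin 3) ∉ B))]
  decide


/-- Attaching a path on three vertices to `G` by an edge from `v` to an endpoint
of the path negates `f`: `f(G⁻) = -f(G)`. -/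

theorem minus_construction {V : Type*} [Fintype V] (G : SimpleGraph V) (v : V) :
    fgraph (glue G (SimpleGraph.pathGraph 3) v 0) = - fgraph G := by
  rw [glue_fgraph, fgraph]
  simp only [path3_sum0, path3_sum1]
  simp only [ite_self, mul_neg_one]
  exact Finset.sum_neg_distrib _
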